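/- Let G = (V, E) be a finite simple graph in which every connected component contains at most one cycle, and let w : E → ℝ with w_e ≥ 0 for all e. Then there exists an acyclic subset F ⊆ E (a forest) with Σ_{e ∈ F} w_e ≥ (2/3) Σ_{e ∈ E} w_e. -/

import Mathlib

open Finset SimpleGraph


private lemma walk_edges_mem' {V : Type*} {U : SimpleGraph V} {A : Set V}
    (hA : ∀ ⦃x y : V⦄, U.Adj x y → x ∈ A → y ∈ A) :
    ∀ {a b : V} (q : U.Walk a b), a ∈ A → ∀ e ∈ q.edges, ∀ x ∈ e, x ∈ A := by
  intro a b q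
  induction q with
  | nil => intro _ e he; simp at he
  | cons h q ih =>
    intro ha e he x hx
    rw [SimpleGraph.Walk.edges_cons] at he
    rcases List.mem_cons.1 he with rfl | he'
    · rcases Sym2.mem_iff.1 hx with rfl | rfl
      · exact ha
      · exact hA h ha
    · exact ih (hA h ha) e he' x hx

private lemma reach_delete' {V : Type*} {K : SimpleGraph V} {a b : V}
    (hab : (K \ SimpleGraph.fromEdgeSet {s(a, b)}).Reachable a b) :
    ∀ {r x : V}, K.Reachable r x → (K \ SimpleGraph.fromEdgeSet {s(a, b)}).Reachable r x := by
  intro r x h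
  obtain ⟨q⟩ := h
  induction q with
  | nil => exact SimpleGraph.Reachable.refl _
  | cons h q ih =>
    rename_i u v _
    refine SimpleGraph.Reachable.trans ?_ ih
    by_cases he : s(u, v) = s(a, b)
    · rw [Sym2.eq_iff] at he
      rcases he with ⟨rfl, rfl⟩ | ⟨rfl, rfl⟩
      · exact hab
      · exact hab.symm
    · refine SimpleGraph.Adj.reachable ?_
      rw [SimpleGraph.sdiff_adj]
      refine ⟨h, fun hh => he ?_⟩
      have := ((SimpleGraph.fromEdgeSet_adj _).1 hh).1
      simpa using this

private lemma card_erase_le_card_edgeFinset' {V : Type*} [Fintype V] [DecidableEq V]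
    (H : SimpleGraph V) [Fintype H.edgeSet] (A : Finset V) (r : V)
    (hconn : ∀ x ∈ A, H.Reachable r x) :
    #(A.erase r) ≤ #H.edgeFinset := by
  classical
  have hpar : ∀ x ∈ A.erase r, ∃ u, H.Adj x u ∧ H.dist u r < H.dist x r := by
    intro x hx
    obtain ⟨hxr, hxA⟩ := Finset.mem_erase.1 hx
    have hre : H.Reachable x r := (hconn x hxA).symm
    obtain ⟨q, hq⟩ := hre.exists_walk_length_eq_dist
    cases q with
    | nil => exact absurd rfl hxr
    | cons h q' =>
      refine ⟨_, h, ?_⟩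
      have h1 := SimpleGraph.dist_le q'
      rw [SimpleGraph.Walk.length_cons] at hq
      omega
  choose! f hf1 hf2 using hpar
  refine Finset.card_le_card_of_injOn (fun x => s(x, f x)) (fun x hx => ?_) ?_
  · rw [Finset.mem_coe, SimpleGraph.mem_edgeFinset, SimpleGraph.mem_edgeSet]
    exact hf1 x hx
  · intro x hx y hy hxy
    rw [Finset.mem_coe] at hx hy
    simp only [Sym2.eq_iff] at hxy
    rcases hxy with ⟨rfl, -⟩ | ⟨h1, h2⟩
    · rfl
    · exfalso
      have d1 := hf2 x hx
      have d2 := hf2 y hy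
      rw [← h1] at d2
      rw [h2] at d1
      omega

private lemma fromEdgeSet_sdiff_single' {V : Type*} [DecidableEq V] (S : Finset (Sym2 V)) (e : Sym2 V) :
    SimpleGraph.fromEdgeSet (↑S : Set (Sym2 V)) \ SimpleGraph.fromEdgeSet {e} =
      SimpleGraph.fromEdgeSet (↑(S.erase e) : Set (Sym2 V)) := by
  ext x y
  simp only [SimpleGraph.sdiff_adj, SimpleGraph.fromEdgeSet_adj, Finset.coe_erase,
    Set.mem_diff, Set.mem_singleton_iff, Finset.mem_coe]
  tauto

private lemma edgeFinset_fromEdgeSet' {V : Type*} [Fintype V] [DecidableEq V]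
    (T : Finset (Sym2 V)) (hT : ∀ e ∈ T, ¬e.IsDiag)
    [Fintype (SimpleGraph.fromEdgeSet (↑T : Set (Sym2 V))).edgeSet] :
    (SimpleGraph.fromEdgeSet (↑T : Set (Sym2 V))).edgeFinset = T := by
  ext e
  rw [SimpleGraph.mem_edgeFinset, SimpleGraph.edgeSet_fromEdgeSet]
  simp only [Set.mem_diff, Finset.mem_coe, Set.mem_setOf_eq]
  exact ⟨fun h => h.1, fun h => ⟨h, hT e h⟩⟩

private theorem aux_two_thirds {V : Type*} [Fintype V] [DecidableEq V] (n : ℕ) :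
    ∀ (G : SimpleGraph V) [DecidableRel G.Adj], #G.edgeFinset = n →
    (∀ c : G.ConnectedComponent,
      {e ∈ G.edgeSet | ∀ v ∈ e, v ∈ c.supp}.ncard ≤ c.supp.ncard) →
    ∀ (w : Sym2 V → ℝ), (∀ e ∈ G.edgeFinset, 0 ≤ w e) →
    ∃ F : Finset (Sym2 V), F ⊆ G.edgeFinset ∧
      (SimpleGraph.fromEdgeSet (F : Set (Sym2 V))).IsAcyclic ∧
      (2 / 3) * ∑ e ∈ G.edgeFinset, w e ≤ ∑ e ∈ F, w e := by
  induction n using Nat.strong_induction_on with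
  | _ n ih =>
  intro G _ hn hG w hw
  classical
  by_cases hac : G.IsAcyclic
  · refine ⟨G.edgeFinset, le_refl _, ?_, ?_⟩
    · rw [SimpleGraph.coe_edgeFinset, SimpleGraph.fromEdgeSet_edgeSet]
      exact hac
    · have h0 : (0:ℝ) ≤ ∑ e ∈ G.edgeFinset, w e := Finset.sum_nonneg hw
      linarith
  · unfold SimpleGraph.IsAcyclic at hac
    push_neg at hac
    obtain ⟨v, p, hp⟩ := hac
    set c := G.connectedComponentMk v with hc
    set A := c.supp.toFinset with hA
    set S := G.edgeFinset.filter (fun e => ∀ x ∈ e, x ∈ c.supp) with hSdef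
    have hSsub : S ⊆ G.edgeFinset := Finset.filter_subset _ _
    -- component edge count
    have hSA : #S ≤ #A := by
      have h1 : {e ∈ G.edgeSet | ∀ x ∈ e, x ∈ c.supp} = (↑S : Set (Sym2 V)) := by
        ext e
        simp [hSdef, Set.mem_setOf_eq, SimpleGraph.mem_edgeFinset]
      have h2 := hG c
      rw [h1, Set.ncard_coe_finset, Set.ncard_eq_toFinset_card'] at h2
      exact h2
    have hclose : ∀ ⦃x y : V⦄, G.Adj x y → x ∈ c.supp → y ∈ c.supp := by
      intro x y hxy hx
      rw [SimpleGraph.ConnectedComponent.mem_supp_iff] at hx ⊢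
      exact (SimpleGraph.ConnectedComponent.connectedComponentMk_eq_of_adj hxy).symm.trans hx
    have hvc : v ∈ c.supp := by rw [SimpleGraph.ConnectedComponent.mem_supp_iff]
    have hvA : v ∈ A := by rw [hA, Set.mem_toFinset]; exact hvc
    have hWalkS : ∀ {x y : V} (q : G.Walk x y), x ∈ c.supp → ∀ e ∈ q.edges, e ∈ S := by
      intro x y q hx e he
      refine Finset.mem_filter.2 ⟨SimpleGraph.mem_edgeFinset.2 (q.edges_subset_edgeSet he), ?_⟩
      exact walk_edges_mem' hclose q hx e he
    set K := SimpleGraph.fromEdgeSet (↑S : Set (Sym2 V)) with hK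
    have hSnondiag : ∀ e ∈ S, ¬e.IsDiag := fun e he =>
      G.not_isDiag_of_mem_edgeSet (SimpleGraph.mem_edgeFinset.1 (hSsub he))
    have hKedge : K.edgeSet = (↑S : Set (Sym2 V)) := by
      rw [hK, SimpleGraph.edgeSet_fromEdgeSet]
      ext e
      simp only [Set.mem_diff, Finset.mem_coe, Set.mem_setOf_eq]
      exact ⟨fun h => h.1, fun h => ⟨h, hSnondiag e h⟩⟩
    have hreachK : ∀ x ∈ c.supp, K.Reachable v x := by
      intro x hx
      rw [SimpleGraph.ConnectedComponent.mem_supp_iff] at hx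
      have hr : G.Reachable v x := (SimpleGraph.ConnectedComponent.eq.1 (hx.trans hc)).symm
      obtain ⟨q⟩ := hr
      exact (q.transfer K (fun e he => by rw [hKedge]; exact hWalkS q hvc e he)).reachable
    -- the cycle transfers into K
    have hpS : ∀ e ∈ p.edges, e ∈ K.edgeSet := fun e he => by
      rw [hKedge]; exact hWalkS p hvc e he
    set pK := p.transfer K hpS with hpK
    have hpKc : pK.IsCycle := hp.transfer hpS
    -- min edge of the cycle
    set C := p.edges.toFinset with hC
    have hCS : C ⊆ S := fun e he => hWalkS p hvc e (List.mem_toFinset.1 he)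
    have hC3 : 3 ≤ #C := by
      rw [hC, List.toFinset_card_of_nodup hp.edges_nodup, SimpleGraph.Walk.length_edges]
      exact hp.three_le_length
    obtain ⟨e₀, he₀C, he₀min⟩ := C.exists_min_image w (Finset.card_pos.1 (by omega))
    induction e₀ using Sym2.ind with
    | _ a b =>
    have habS : s(a, b) ∈ S := hCS he₀C
    have habE : s(a, b) ∈ G.edgeFinset := hSsub habS
    -- delete min edge from K: reachability survives
    have hRab : (K \ SimpleGraph.fromEdgeSet {s(a, b)}).Reachable a b := by
      have := SimpleGraph.adj_and_reachable_delete_edges_iff_exists_cycle.2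
        ⟨v, pK, hpKc, by rw [hpK, SimpleGraph.Walk.edges_transfer]; exact List.mem_toFinset.1 he₀C⟩
      exact this.2
    set T := S.erase s(a, b) with hT
    have hTsub : T ⊆ S := Finset.erase_subset _ _
    set H₁ := SimpleGraph.fromEdgeSet (↑T : Set (Sym2 V)) with hH₁def
    have hH₁ : H₁ = K \ SimpleGraph.fromEdgeSet {s(a, b)} := by
      rw [hH₁def, hK, fromEdgeSet_sdiff_single', hT]
    have hreach₁ : ∀ x ∈ c.supp, H₁.Reachable v x := by
      rw [hH₁]; exact fun x hx => reach_delete' hRab (hreachK x hx)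
    have hTnondiag : ∀ e ∈ T, ¬e.IsDiag := fun e he => hSnondiag e (hTsub he)
    have hH₁edge : H₁.edgeFinset = T := edgeFinset_fromEdgeSet' T hTnondiag
    -- H₁ is acyclic by the counting argument
    have hH₁acyc : H₁.IsAcyclic := by
      intro u q hq
      have hlen : 0 < q.edges.length := by
        rw [SimpleGraph.Walk.length_edges]
        have := hq.three_le_length; omega
      obtain ⟨e₁, he₁⟩ := List.exists_mem_of_length_pos hlen
      induction e₁ using Sym2.ind with
      | _ a₁ b₁ =>
      have he₁T : s(a₁, b₁) ∈ T := by
        have := q.edges_subset_edgeSet he₁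
        rwa [← SimpleGraph.mem_edgeFinset, hH₁edge] at this
      have hR₁ : (H₁ \ SimpleGraph.fromEdgeSet {s(a₁, b₁)}).Reachable a₁ b₁ :=
        (SimpleGraph.adj_and_reachable_delete_edges_iff_exists_cycle.2 ⟨u, q, hq, he₁⟩).2
      have hreach₂ : ∀ x ∈ c.supp, (H₁ \ SimpleGraph.fromEdgeSet {s(a₁, b₁)}).Reachable v x :=
        fun x hx => reach_delete' hR₁ (hreach₁ x hx)
      have hH₂eq : H₁ \ SimpleGraph.fromEdgeSet {s(a₁, b₁)} =
          SimpleGraph.fromEdgeSet (↑(T.erase s(a₁, b₁)) : Set (Sym2 V)) := by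
        rw [hH₁def, fromEdgeSet_sdiff_single']
      have hH₂edge : (H₁ \ SimpleGraph.fromEdgeSet {s(a₁, b₁)}).edgeFinset = T.erase s(a₁, b₁) := by
        ext e
        rw [SimpleGraph.mem_edgeFinset, hH₂eq, SimpleGraph.edgeSet_fromEdgeSet]
        simp only [Set.mem_diff, Finset.mem_coe, Set.mem_setOf_eq]
        exact ⟨fun h => h.1, fun h => ⟨h, hTnondiag e (Finset.erase_subset _ _ h)⟩⟩
      have hcard := card_erase_le_card_edgeFinset' (H₁ \ SimpleGraph.fromEdgeSet {s(a₁, b₁)}) A v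
        (fun x hx => hreach₂ x (by rwa [hA, Set.mem_toFinset] at hx))
      rw [hH₂edge] at hcard
      have c1 : #(T.erase s(a₁, b₁)) = #T - 1 := Finset.card_erase_of_mem he₁T
      have c2 : #T = #S - 1 := Finset.card_erase_of_mem habS
      have c3 : #(A.erase v) = #A - 1 := Finset.card_erase_of_mem hvA
      have c4 : 1 ≤ #S := Finset.card_pos.2 ⟨_, habS⟩
      have c5 : 1 ≤ #T := Finset.card_pos.2 ⟨_, he₁T⟩
      omega
    -- the recursive graph
    set G' := G.deleteEdges (↑S : Set (Sym2 V)) with hG'def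
    have hG'le : G' ≤ G := SimpleGraph.deleteEdges_le _
    letI : DecidableRel G'.Adj := Classical.decRel _
    have hE' : G'.edgeFinset = G.edgeFinset \ S := by
      ext e
      rw [SimpleGraph.mem_edgeFinset, hG'def, SimpleGraph.edgeSet_deleteEdges]
      simp [SimpleGraph.mem_edgeFinset]
    have hlt : #G'.edgeFinset < n := by
      rw [hE', ← hn]
      exact Finset.card_lt_card (Finset.sdiff_ssubset hSsub ⟨_, habS⟩)
    -- hypothesis preserved
    have hG' : ∀ c'' : G'.ConnectedComponent,
        {e ∈ G'.edgeSet | ∀ x ∈ e, x ∈ c''.supp}.ncard ≤ c''.supp.ncard := by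
      intro c''
      obtain ⟨u, rfl⟩ := c''.exists_rep
      have hrep : Quot.mk G'.Reachable u = G'.connectedComponentMk u := rfl
      rw [hrep]
      by_cases hu : u ∈ c.supp
      · -- u is isolated in G'
        have hiso : ∀ x, ¬ G'.Adj u x := by
          intro x hx
          rw [hG'def, SimpleGraph.deleteEdges_adj] at hx
          refine hx.2 ?_
          rw [Finset.mem_coe, hSdef, Finset.mem_filter]
          refine ⟨SimpleGraph.mem_edgeFinset.2 hx.1, ?_⟩
          intro z hz
          rcases Sym2.mem_iff.1 hz with rfl | rfl
          · exact hu
          · exact hclose hx.1 hu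
        have hsupp : (G'.connectedComponentMk u).supp = {u} := by
          ext x
          rw [SimpleGraph.ConnectedComponent.mem_supp_iff, Set.mem_singleton_iff]
          constructor
          · intro hx
            obtain ⟨q⟩ := (SimpleGraph.ConnectedComponent.eq.1 hx).symm
            cases q with
            | nil => rfl
            | cons h q => exact absurd h (hiso _)
          · rintro rfl; rfl
        rw [hsupp]
        have : {e ∈ G'.edgeSet | ∀ x ∈ e, x ∈ ({u} : Set V)} = ∅ := by
          rw [Set.eq_empty_iff_forall_notMem]
          intro e ⟨he, hin⟩
          induction e using Sym2.ind with
          | _ y z =>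
          have hy : y = u := hin y (Sym2.mem_mk_left _ _)
          have hz : z = u := hin z (Sym2.mem_mk_right _ _)
          have hadj := G'.mem_edgeSet.1 he
          rw [hy] at hadj
          exact hiso z hadj
        rw [this, Set.ncard_empty, Set.ncard_singleton]
        omega
      · -- component is untouched
        have hnever : ∀ x, G.Reachable u x → x ∉ c.supp := by
          intro x hx hxc
          refine hu ?_
          rw [SimpleGraph.ConnectedComponent.mem_supp_iff] at hxc ⊢
          exact (SimpleGraph.ConnectedComponent.sound hx).trans hxc
        have hreach_iff : ∀ x, G'.Reachable u x ↔ G.Reachable u x := by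
          intro x
          constructor
          · exact fun h => h.mono hG'le
          · intro h
            obtain ⟨q⟩ := h
            refine (q.transfer G' ?_).reachable
            intro e he
            rw [hG'def, SimpleGraph.edgeSet_deleteEdges]
            refine ⟨q.edges_subset_edgeSet he, fun heS => ?_⟩
            induction e using Sym2.ind with
            | _ y z =>
            have hy : y ∈ q.support := q.fst_mem_support_of_mem_edges he
            have hyr : G.Reachable u y := (q.takeUntil y hy).reachable
            refine hnever y hyr ?_
            rw [Finset.mem_coe, hSdef, Finset.mem_filter] at heS
            exact heS.2 y (Sym2.mem_mk_left _ _)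
        have hsupp_eq : (G'.connectedComponentMk u).supp = (G.connectedComponentMk u).supp := by
          ext x
          rw [SimpleGraph.ConnectedComponent.mem_supp_iff,
            SimpleGraph.ConnectedComponent.mem_supp_iff,
            SimpleGraph.ConnectedComponent.eq, SimpleGraph.ConnectedComponent.eq]
          constructor
          · intro h; exact ((hreach_iff x).1 h.symm).symm
          · intro h; exact ((hreach_iff x).2 h.symm).symm
        rw [hsupp_eq]
        have hedges_eq : {e ∈ G'.edgeSet | ∀ x ∈ e, x ∈ (G.connectedComponentMk u).supp} =
            {e ∈ G.edgeSet | ∀ x ∈ e, x ∈ (G.connectedComponentMk u).supp} := by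
          ext e
          simp only [Set.mem_setOf_eq]
          constructor
          · rintro ⟨he, hP⟩
            rw [hG'def, SimpleGraph.edgeSet_deleteEdges] at he
            exact ⟨he.1, hP⟩
          · rintro ⟨he, hP⟩
            refine ⟨?_, hP⟩
            rw [hG'def, SimpleGraph.edgeSet_deleteEdges]
            refine ⟨he, fun heS => ?_⟩
            induction e using Sym2.ind with
            | _ y z =>
            have hyu : y ∈ (G.connectedComponentMk u).supp := hP y (Sym2.mem_mk_left _ _)
            rw [Finset.mem_coe, hSdef, Finset.mem_filter] at heS
            have hyc : y ∈ c.supp := heS.2 y (Sym2.mem_mk_left _ _)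
            rw [SimpleGraph.ConnectedComponent.mem_supp_iff] at hyu
            refine hnever y ?_ hyc
            exact (SimpleGraph.ConnectedComponent.eq.1 hyu).symm
        rw [hedges_eq]
        exact hG (G.connectedComponentMk u)
    -- apply induction hypothesis
    have hw' : ∀ e ∈ G'.edgeFinset, 0 ≤ w e := by
      intro e he
      rw [hE'] at he
      exact hw e (Finset.mem_sdiff.1 he).1
    obtain ⟨F', hF'sub, hF'acyc, hF'w⟩ := ih _ hlt G' rfl hG' w hw'
    have hF'S : ∀ e ∈ F', e ∉ S := by
      intro e he
      have := hF'sub he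
      rw [hE', Finset.mem_sdiff] at this
      exact this.2
    refine ⟨F' ∪ T, ?_, ?_, ?_⟩
    · refine Finset.union_subset (fun e he => ?_) (fun e he => hSsub (hTsub he))
      have := hF'sub he
      rw [hE', Finset.mem_sdiff] at this
      exact this.1
    · -- acyclicity of the union
      set U := SimpleGraph.fromEdgeSet (↑(F' ∪ T) : Set (Sym2 V)) with hU
      intro x₀ q hq
      have hUG : U ≤ G := by
        rw [hU]
        have : (↑(F' ∪ T) : Set (Sym2 V)) ⊆ G.edgeSet := by
          intro e he
          rw [Finset.mem_coe, Finset.mem_union] at he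
          rw [← SimpleGraph.mem_edgeFinset]
          rcases he with he | he
          · have := hF'sub he
            rw [hE', Finset.mem_sdiff] at this
            exact this.1
          · exact hSsub (hTsub he)
        calc SimpleGraph.fromEdgeSet (↑(F' ∪ T) : Set (Sym2 V))
            ≤ SimpleGraph.fromEdgeSet G.edgeSet := SimpleGraph.fromEdgeSet_mono this
          _ = G := SimpleGraph.fromEdgeSet_edgeSet G
      by_cases hx₀ : x₀ ∈ c.supp
      · -- cycle lives in T
        have hmem : ∀ e ∈ q.edges, ∀ x ∈ e, x ∈ c.supp :=
          walk_edges_mem' (fun x y hxy hx => hclose (hUG hxy) hx) q hx₀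
        have hqT : ∀ e ∈ q.edges, e ∈ H₁.edgeSet := by
          intro e he
          have heU := q.edges_subset_edgeSet he
          rw [hU, SimpleGraph.edgeSet_fromEdgeSet, Set.mem_diff, Finset.mem_coe,
            Finset.mem_union] at heU
          rw [← SimpleGraph.mem_edgeFinset, hH₁edge]
          rcases heU.1 with heF | heT
          · exfalso
            refine hF'S e heF ?_
            rw [hSdef, Finset.mem_filter]
            refine ⟨?_, hmem e he⟩
            have := hF'sub heF
            rw [hE', Finset.mem_sdiff] at this
            exact this.1
          · exact heT
        exact hH₁acyc (q.transfer H₁ hqT) (hq.transfer hqT)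
      · -- cycle lives in F'
        have hmem : ∀ e ∈ q.edges, ∀ x ∈ e, x ∈ ((c.supp)ᶜ : Set V) := by
          refine walk_edges_mem' (A := (c.supp)ᶜ) (fun x y hxy hx hy => ?_) q hx₀
          exact hx (hclose (hUG hxy).symm hy)
        have hqF : ∀ e ∈ q.edges, e ∈ (SimpleGraph.fromEdgeSet (↑F' : Set (Sym2 V))).edgeSet := by
          intro e he
          have heU := q.edges_subset_edgeSet he
          rw [hU, SimpleGraph.edgeSet_fromEdgeSet, Set.mem_diff, Finset.mem_coe,
            Finset.mem_union] at heU
          rw [SimpleGraph.edgeSet_fromEdgeSet, Set.mem_diff, Finset.mem_coe]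
          refine ⟨?_, heU.2⟩
          rcases heU.1 with heF | heT
          · exact heF
          · exfalso
            have heS := hTsub heT
            rw [hSdef, Finset.mem_filter] at heS
            induction e using Sym2.ind with
            | _ y z =>
            exact hmem _ he y (Sym2.mem_mk_left _ _) (heS.2 y (Sym2.mem_mk_left _ _))
        exact hF'acyc (q.transfer _ hqF) (hq.transfer hqF)
    · -- the weight bound
      have hdisj : Disjoint F' T := by
        rw [Finset.disjoint_left]
        exact fun e he het => hF'S e he (hTsub het)
      rw [Finset.sum_union hdisj]
      have hsplit : ∑ e ∈ G'.edgeFinset, w e + ∑ e ∈ S, w e = ∑ e ∈ G.edgeFinset, w e := by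
        rw [hE']; exact Finset.sum_sdiff hSsub
      have hsumT : ∑ e ∈ T, w e = ∑ e ∈ S, w e - w s(a, b) := by
        rw [hT]; exact Finset.sum_erase_eq_sub habS
      have hCmin : ∀ e ∈ C, w s(a, b) ≤ w e := he₀min
      have hab0 : 0 ≤ w s(a, b) := hw _ habE
      have h3C : 3 * w s(a, b) ≤ ∑ e ∈ C, w e := by
        have h1 : #C • w s(a, b) ≤ ∑ e ∈ C, w e := Finset.card_nsmul_le_sum C w _ hCmin
        rw [nsmul_eq_mul] at h1
        have h2 : (3:ℝ) ≤ (#C : ℝ) := by exact_mod_cast hC3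
        nlinarith
      have hCsum : ∑ e ∈ C, w e ≤ ∑ e ∈ S, w e :=
        Finset.sum_le_sum_of_subset_of_nonneg hCS (fun e he _ => hw e (hSsub he))
      linarith

/-- **Deleting a cheapest edge from each cycle.** If every connected component of a
finite simple graph `G` contains at most one cycle (i.e., has at most as many edges as
vertices), then for any nonnegative edge weights there is an acyclic edge set `F`
retaining at least `2/3` of the total weight. -/
theorem unicyclic_to_forest_two_thirds
    {V : Type*} [Fintype V] [DecidableEq V]
    (G : SimpleGraph V) [DecidableRel G.Adj]
    (hG : ∀ c : G.ConnectedComponent,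
      {e ∈ G.edgeSet | ∀ v ∈ e, v ∈ c.supp}.ncard ≤ c.supp.ncard)
    (w : Sym2 V → ℝ) (hw : ∀ e ∈ G.edgeFinset, 0 ≤ w e) :
    ∃ F : Finset (Sym2 V), F ⊆ G.edgeFinset ∧
      (SimpleGraph.fromEdgeSet (F : Set (Sym2 V))).IsAcyclic ∧
      (2 / 3) * ∑ e ∈ G.edgeFinset, w e ≤ ∑ e ∈ F, w e := by
  exact aux_two_thirds #G.edgeFinset G rfl hG w hw
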